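/- Let $\lambda > 0$, $R^2 > 0$ with $\lambda \leq R^2$, let $T \geq 2$ be such that $\log_2 T$ is a positive integer, and let $\sigma^2 > 0$. Consider the step-decay variance sum $S = \sum_{\ell=1}^{\log_2 T} \frac{\sigma^2}{2^{\ell} R^2} \prod_{u=\ell+1}^{\log_2 T} \exp\left(-\frac{\lambda T}{2^u R^2 \log_2 T}\right)$. Then $S \leq \frac{2\sigma^2}{\lambda} \cdot \frac{\log_2 T}{T}$. -/

import Mathlib

open Finset Real

private lemma sd9_exp_ge_quad {x : ℝ} (hx : 0 ≤ x) : 1 + x + x^2/2 ≤ Real.exp x := by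
  have := Real.sum_le_exp_of_nonneg hx 3
  simp [Finset.sum_range_succ] at this
  nlinarith [this]

private lemma sd9_exp_ge_cubic {x : ℝ} (hx : 0 ≤ x) : 1 + x + x^2/2 + x^3/6 ≤ Real.exp x := by
  have := Real.sum_le_exp_of_nonneg hx 4
  simp [Finset.sum_range_succ, Nat.factorial] at this
  nlinarith [this]

private lemma sd9_exp_neg_ge {a r : ℝ} (h : r * Real.exp a ≤ 1) : r ≤ Real.exp (-a) := by
  have hp := Real.exp_pos a
  rw [Real.exp_neg]
  have h2 := mul_le_mul_of_nonneg_right h (le_of_lt (inv_pos.mpr hp))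
  rwa [mul_assoc, mul_inv_cancel₀ (ne_of_gt hp), mul_one, one_mul] at h2

private lemma sd9_exp_two_lt : Real.exp 2 < 7.3890561 := by
  have h1 := Real.exp_one_lt_d9
  have : Real.exp 2 = Real.exp 1 * Real.exp 1 := by rw [← Real.exp_add]; norm_num
  nlinarith [Real.exp_pos 1]

private lemma sd9_exp_three_lt : Real.exp 3 < 20.085537 := by
  have h1 := Real.exp_one_lt_d9
  have h2 := sd9_exp_two_lt
  have : Real.exp 3 = Real.exp 2 * Real.exp 1 := by rw [← Real.exp_add]; norm_num
  nlinarith [Real.exp_pos 1, Real.exp_pos 2]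

private lemma sd9_exp_four_lt : Real.exp 4 < 54.59816 := by
  have h2 := sd9_exp_two_lt
  have : Real.exp 4 = Real.exp 2 * Real.exp 2 := by rw [← Real.exp_add]; norm_num
  nlinarith [Real.exp_pos 2]

private lemma sd9_exp_neg_one : (0.3678:ℝ) ≤ Real.exp (-1) := by
  apply sd9_exp_neg_ge; nlinarith [Real.exp_one_lt_d9, Real.exp_pos 1]
private lemma sd9_exp_neg_two : (0.1353:ℝ) ≤ Real.exp (-2) := by
  apply sd9_exp_neg_ge; nlinarith [sd9_exp_two_lt, Real.exp_pos 2]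
private lemma sd9_exp_neg_three : (0.0497:ℝ) ≤ Real.exp (-3) := by
  apply sd9_exp_neg_ge; nlinarith [sd9_exp_three_lt, Real.exp_pos 3]
private lemma sd9_exp_neg_four : (0.0183:ℝ) ≤ Real.exp (-4) := by
  apply sd9_exp_neg_ge; nlinarith [sd9_exp_four_lt, Real.exp_pos 4]

private lemma sd9_exp_tenth_le : Real.exp (1/10) ≤ 1.1052 := by
  have h : Real.exp (1/10) ^ (10:ℕ) = Real.exp 1 := by
    rw [← Real.exp_nat_mul]; norm_num
  have h1 : Real.exp (1/10) ^ (10:ℕ) ≤ (1.1052:ℝ) ^ (10:ℕ) := by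
    rw [h]; nlinarith [Real.exp_one_lt_d9]
  exact le_of_pow_le_pow_left₀ (by norm_num) (by norm_num) h1

private lemma sd9_phi_lower {y a r c : ℝ} (hya : y ≤ a) (h0 : 0 ≤ y) (hr : r ≤ Real.exp (-a))
    (hr0 : 0 ≤ r)
    (hp : c ≤ (y^2/4 + y^3/24) * ((1 + (a-y) + (a-y)^2/2) * r)) :
    c ≤ (y^2/4 + y^3/24) * Real.exp (-y) := by
  have hq : 1 + (a-y) + (a-y)^2/2 ≤ Real.exp (a-y) := sd9_exp_ge_quad (by linarith)
  have hqpos : (0:ℝ) ≤ 1 + (a-y) + (a-y)^2/2 := by nlinarith [sq_nonneg (a-y)]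
  have hsplit : Real.exp (-y) = Real.exp (a-y) * Real.exp (-a) := by
    rw [← Real.exp_add]; ring_nf
  have hmul : (1 + (a-y) + (a-y)^2/2) * r ≤ Real.exp (a-y) * Real.exp (-a) :=
    mul_le_mul hq hr hr0 (le_of_lt (Real.exp_pos _))
  have hpoly : (0:ℝ) ≤ y^2/4 + y^3/24 := by positivity
  calc c ≤ (y^2/4 + y^3/24) * ((1 + (a-y) + (a-y)^2/2) * r) := hp
    _ ≤ (y^2/4 + y^3/24) * (Real.exp (a-y) * Real.exp (-a)) :=
        mul_le_mul_of_nonneg_left hmul hpoly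
    _ = (y^2/4 + y^3/24) * Real.exp (-y) := by rw [hsplit]

private lemma sd9_oct1 {y : ℝ} (h1 : 1/2 ≤ y) (h2 : y ≤ 1) :
    (0.04:ℝ) ≤ (y^2/4 + y^3/24) * Real.exp (-y) := by
  refine sd9_phi_lower h2 (by linarith) sd9_exp_neg_one (by norm_num) ?_
  nlinarith [mul_nonneg (mul_nonneg (sub_nonneg.mpr h1) (sub_nonneg.mpr h1)) (sub_nonneg.mpr h2),
    mul_nonneg (sub_nonneg.mpr h1) (sub_nonneg.mpr h2), sq_nonneg (y-1/2),
    pow_nonneg (sub_nonneg.mpr h1) 4, pow_nonneg (sub_nonneg.mpr h1) 5,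
    mul_nonneg (pow_nonneg (sub_nonneg.mpr h1) 3) (sub_nonneg.mpr h2)]

private lemma sd9_oct2 {y : ℝ} (h1 : 1 ≤ y) (h2 : y ≤ 2) :
    (0.097:ℝ) ≤ (y^2/4 + y^3/24) * Real.exp (-y) := by
  refine sd9_phi_lower h2 (by linarith) sd9_exp_neg_two (by norm_num) ?_
  nlinarith [mul_nonneg (mul_nonneg (sub_nonneg.mpr h1) (sub_nonneg.mpr h1)) (sub_nonneg.mpr h2),
    mul_nonneg (sub_nonneg.mpr h1) (sub_nonneg.mpr h2), sq_nonneg (y-1),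
    pow_nonneg (sub_nonneg.mpr h1) 4, pow_nonneg (sub_nonneg.mpr h1) 5,
    mul_nonneg (pow_nonneg (sub_nonneg.mpr h1) 3) (sub_nonneg.mpr h2)]

private lemma sd9_oct3 {y : ℝ} (h1 : 2 ≤ y) (h2 : y ≤ 4) :
    (0.121:ℝ) ≤ (y^2/4 + y^3/24) * Real.exp (-y) := by
  rcases le_total y 3 with h3 | h3
  · refine sd9_phi_lower h3 (by linarith) sd9_exp_neg_three (by norm_num) ?_
    nlinarith [mul_nonneg (mul_nonneg (sub_nonneg.mpr h1) (sub_nonneg.mpr h1)) (sub_nonneg.mpr h3),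
      mul_nonneg (sub_nonneg.mpr h1) (sub_nonneg.mpr h3), sq_nonneg (y-2),
      pow_nonneg (sub_nonneg.mpr h1) 4, pow_nonneg (sub_nonneg.mpr h1) 5,
      mul_nonneg (pow_nonneg (sub_nonneg.mpr h1) 3) (sub_nonneg.mpr h3)]
  · refine sd9_phi_lower h2 (by linarith) sd9_exp_neg_four (by norm_num) ?_
    nlinarith [mul_nonneg (mul_nonneg (sub_nonneg.mpr h3) (sub_nonneg.mpr h3)) (sub_nonneg.mpr h2),
      mul_nonneg (sub_nonneg.mpr h3) (sub_nonneg.mpr h2), sq_nonneg (y-3),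
      pow_nonneg (sub_nonneg.mpr h3) 4, pow_nonneg (sub_nonneg.mpr h3) 5,
      mul_nonneg (pow_nonneg (sub_nonneg.mpr h3) 3) (sub_nonneg.mpr h2),
      mul_nonneg (mul_nonneg (sub_nonneg.mpr h3) (sub_nonneg.mpr h2)) (sub_nonneg.mpr h2)]

private lemma sd9_crossing {d a : ℝ} (hd : 0 < d) (hda : d ≤ a) :
    ∀ m : ℕ, a < d * 2^m → ∃ k, k ≤ m ∧ a < d*2^k ∧ d*2^k ≤ 2*a := by
  intro m
  induction m with
  | zero => intro h; simp at h; exact absurd h (not_lt.mpr hda)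
  | succ m ih =>
    intro h
    by_cases hc : a < d*2^m
    · obtain ⟨k,hk,h1,h2⟩ := ih hc; exact ⟨k, Nat.le_succ_of_le hk, h1, h2⟩
    · push_neg at hc
      refine ⟨m+1, le_refl _, h, ?_⟩
      have h2 : (2:ℝ)^(m+1) = 2*2^m := by ring
      rw [h2]; nlinarith

private lemma sd9_core {y : ℝ} (hy : 0 ≤ y) :
    y * Real.exp (-y) + (y^2/4 + y^3/24) * Real.exp (-y) + 2 * Real.exp (-y)
      ≤ 2 * Real.exp (-(y/2)) := by
  have h := sd9_exp_ge_cubic (by linarith : (0:ℝ) ≤ y/2)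
  have h2 : 2 + y + y^2/4 + y^3/24 ≤ 2 * Real.exp (y/2) := by nlinarith
  have h3 := mul_le_mul_of_nonneg_right h2 (Real.exp_pos (-y)).le
  have h4 : Real.exp (y/2) * Real.exp (-y) = Real.exp (-(y/2)) := by
    rw [← Real.exp_add]; ring_nf
  nlinarith [h3, h4, Real.exp_pos (-y)]

private lemma sd9_telesc (d : ℝ) (n : ℕ) (hd0 : 0 < d) :
    ∑ k ∈ Finset.range n, d * 2^k * Real.exp (-(d * (2^k - 1)))
      ≤ (2 * Real.exp (d - d*2^0/2) - 2 * Real.exp (d - d*2^n/2))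
        - Real.exp d * ∑ k ∈ Finset.range n,
            ((d*2^k)^2/4 + (d*2^k)^3/24) * Real.exp (-(d*2^k)) := by
  set G : ℕ → ℝ := fun k => 2 * Real.exp (d - d*2^k/2) with hG
  set ψ : ℕ → ℝ := fun k => ((d*2^k)^2/4 + (d*2^k)^3/24) * Real.exp (-(d*2^k)) with hψ
  have per : ∀ k ∈ Finset.range n,
      d * 2^k * Real.exp (-(d * (2^k - 1))) ≤ (G k - G (k+1)) - Real.exp d * ψ k := by
    intro k _
    have hy : (0:ℝ) ≤ d * 2^k := by positivity
    have hcore := sd9_core hy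
    have hmul := mul_le_mul_of_nonneg_left hcore (Real.exp_pos d).le
    have e1 : Real.exp (-(d * (2^k - 1))) = Real.exp d * Real.exp (-(d*2^k)) := by
      rw [← Real.exp_add]; ring_nf
    have e2 : G k = 2 * (Real.exp d * Real.exp (-(d*2^k/2))) := by
      rw [hG]; simp only []; rw [← Real.exp_add]; ring_nf
    have e3 : G (k+1) = 2 * (Real.exp d * Real.exp (-(d*2^k))) := by
      rw [hG]; simp only []; rw [← Real.exp_add]
      congr 1
      rw [pow_succ]; ring
    rw [e1, e2, e3, hψ]
    simp only []
    nlinarith [hmul]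
  calc ∑ k ∈ Finset.range n, d * 2^k * Real.exp (-(d * (2^k - 1)))
      ≤ ∑ k ∈ Finset.range n, ((G k - G (k+1)) - Real.exp d * ψ k) :=
        Finset.sum_le_sum per
    _ = (G 0 - G n) - Real.exp d * ∑ k ∈ Finset.range n, ψ k := by
        rw [Finset.sum_sub_distrib, Finset.sum_range_sub' G, ← Finset.mul_sum]
    _ = _ := by rw [hG]

private lemma sd9_key (d : ℝ) (n : ℕ) (hn : 5 ≤ n) (hd0 : 0 < d) (hd : d * n ≤ 1) :
    ∑ k ∈ Finset.range n, d * 2^k * Real.exp (-(d * (2^k - 1))) ≤ 2 := by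
  have hd5 : d ≤ 1/5 := by
    have h5 : (5:ℝ) ≤ n := by exact_mod_cast hn
    nlinarith
  set ψ : ℕ → ℝ := fun k => ((d*2^k)^2/4 + (d*2^k)^3/24) * Real.exp (-(d*2^k)) with hψ
  have hψnn : ∀ k, 0 ≤ ψ k := fun k => by positivity
  have hΨnn : 0 ≤ ∑ k ∈ Finset.range n, ψ k := Finset.sum_nonneg fun k _ => hψnn k
  have hG0 : 2 * Real.exp (d - d*2^0/2) ≤ 2 * 1.1052 := by
    have : d - d*2^0/2 = d/2 := by ring
    rw [this]
    have h1 : Real.exp (d/2) ≤ Real.exp (1/10) := Real.exp_le_exp.mpr (by linarith)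
    nlinarith [sd9_exp_tenth_le]
  have hpow : (2:ℝ)^n = 2 * 2^(n-1) := by
    conv_lhs => rw [show n = (n-1)+1 from (Nat.succ_pred_eq_of_pos (by omega)).symm]
    rw [pow_succ]; ring
  have hYeq : d*2^n/2 = d*2^(n-1) := by rw [hpow]; ring
  have htel := sd9_telesc d n hd0
  rw [hYeq] at htel
  set Y := d*2^(n-1) with hY
  rcases le_or_gt Y 2 with hc | hc
  · have h1 : Real.exp (-2) ≤ Real.exp (d - Y) := Real.exp_le_exp.mpr (by linarith)
    have h2 : (0.1353:ℝ) ≤ Real.exp (d - Y) := le_trans sd9_exp_neg_two h1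
    have h3 : 0 ≤ Real.exp d * ∑ k ∈ Finset.range n, ψ k :=
      mul_nonneg (Real.exp_pos d).le hΨnn
    linarith
  · have hd2 : d ≤ 1/2 := by linarith
    obtain ⟨k1, hk1m, hk1a, hk1b⟩ :=
      sd9_crossing hd0 (by linarith : d ≤ (1:ℝ)/2) (n-1) (by rw [← hY]; linarith)
    obtain ⟨k2, hk2m, hk2a, hk2b⟩ :=
      sd9_crossing hd0 (by linarith : d ≤ (1:ℝ)) (n-1) (by rw [← hY]; linarith)
    obtain ⟨k3, hk3m, hk3a, hk3b⟩ :=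
      sd9_crossing hd0 (by linarith : d ≤ (2:ℝ)) (n-1) (by rw [← hY]; linarith)
    have hψ1 : (0.04:ℝ) ≤ ψ k1 := sd9_oct1 hk1a.le (by linarith)
    have hψ2 : (0.097:ℝ) ≤ ψ k2 := sd9_oct2 hk2a.le (by linarith)
    have hψ3 : (0.121:ℝ) ≤ ψ k3 := sd9_oct3 hk3a.le (by linarith)
    have h12 : k1 ≠ k2 := by intro h; rw [h] at hk1b; linarith
    have h13 : k1 ≠ k3 := by intro h; rw [h] at hk1b; linarith
    have h23 : k2 ≠ k3 := by intro h; rw [h] at hk2b; linarith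
    have hsub : ({k1, k2, k3} : Finset ℕ) ⊆ Finset.range n := by
      intro x hx
      simp only [Finset.mem_insert, Finset.mem_singleton] at hx
      rcases hx with rfl | rfl | rfl <;> (rw [Finset.mem_range]; omega)
    have hsum3 : ∑ k ∈ ({k1, k2, k3} : Finset ℕ), ψ k = ψ k1 + ψ k2 + ψ k3 := by
      rw [Finset.sum_insert (by simp [h12, h13]), Finset.sum_insert (by simp [h23]),
        Finset.sum_singleton]; ring
    have hΨ : (0.258:ℝ) ≤ ∑ k ∈ Finset.range n, ψ k := by
      have := Finset.sum_le_sum_of_subset_of_nonneg hsub (fun k _ _ => hψnn k)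
      rw [hsum3] at this
      linarith
    have hexpd : (1:ℝ) ≤ Real.exp d := Real.one_le_exp hd0.le
    have h3 : (0.258:ℝ) ≤ Real.exp d * ∑ k ∈ Finset.range n, ψ k := by nlinarith
    have h4 : 0 < 2 * Real.exp (d - Y) := by positivity
    linarith

private lemma sd9_exp_neg_le_one {x : ℝ} (hx : 0 ≤ x) : Real.exp (-x) ≤ 1 :=
  Real.exp_le_one_iff.mpr (by linarith)

private lemma sd9_key_all (d : ℝ) (n : ℕ) (hn : 1 ≤ n) (hd0 : 0 < d) (hd : d * n ≤ 1) :
    ∑ k ∈ Finset.range n, d * 2^k * Real.exp (-(d * (2^k - 1))) ≤ 2 := by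
  rcases Nat.lt_or_ge n 5 with h5 | h5
  · have hu : Real.exp (-d) ≤ 1 := by
      have := sd9_exp_neg_le_one hd0.le
      simpa using this
    have hu0 : 0 < Real.exp (-d) := Real.exp_pos _
    have hdu : d * Real.exp (-d) ≤ d := by nlinarith
    have hv0 : 0 < Real.exp (-(d*3)) := Real.exp_pos _
    have hw0 : 0 < Real.exp (-(d*7)) := Real.exp_pos _
    have hv : (1 + 3*d + (3*d)^2/2) * Real.exp (-(d*3)) ≤ 1 := by
      have ha := sd9_exp_ge_quad (by positivity : (0:ℝ) ≤ 3*d)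
      have hb := mul_le_mul_of_nonneg_right ha hv0.le
      have hc : Real.exp (3*d) * Real.exp (-(d*3)) = 1 := by
        rw [← Real.exp_add, show 3*d + -(d*3) = 0 from by ring, Real.exp_zero]
      linarith
    have hw : (1 + 7*d + (7*d)^2/2) * Real.exp (-(d*7)) ≤ 1 := by
      have ha := sd9_exp_ge_quad (by positivity : (0:ℝ) ≤ 7*d)
      have hb := mul_le_mul_of_nonneg_right ha hw0.le
      have hc : Real.exp (7*d) * Real.exp (-(d*7)) = 1 := by
        rw [← Real.exp_add, show 7*d + -(d*7) = 0 from by ring, Real.exp_zero]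
      linarith
    interval_cases n
    · simp only [Finset.sum_range_succ, Finset.sum_range_zero, pow_zero, pow_one]
      push_cast at hd
      norm_num
      linarith
    · simp only [Finset.sum_range_succ, Finset.sum_range_zero, pow_zero, pow_one]
      push_cast at hd
      norm_num
      linarith
    · simp only [Finset.sum_range_succ, Finset.sum_range_zero, pow_zero, pow_one]
      push_cast at hd
      norm_num
      have h6 : 6*d*Real.exp (-(d*3)) ≤ 1 := by
        have hpoly : 6*d ≤ 1 + 3*d + (3*d)^2/2 := by nlinarith [sq_nonneg (3*d)]
        have := mul_le_mul_of_nonneg_right hpoly hv0.le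
        linarith
      linarith
    · simp only [Finset.sum_range_succ, Finset.sum_range_zero, pow_zero, pow_one]
      push_cast at hd
      norm_num
      have h8v : 8*d*Real.exp (-(d*3)) ≤ 1 := by
        have hpoly : 8*d ≤ 1 + 3*d + (3*d)^2/2 := by nlinarith [sq_nonneg (1 - 3*d)]
        have := mul_le_mul_of_nonneg_right hpoly hv0.le
        linarith
      have h50w : (50/3)*d*Real.exp (-(d*7)) ≤ 1 := by
        have hpoly : (50/3)*d ≤ 1 + 7*d + (7*d)^2/2 := by nlinarith [sq_nonneg (d - 29/147)]
        have := mul_le_mul_of_nonneg_right hpoly hw0.le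
        linarith
      linarith
  · exact sd9_key d n h5 hd0 hd

private lemma sd9_geo (l : ℕ) :
    ∀ n : ℕ, l ≤ n → ∑ u ∈ Finset.Icc (l+1) n, ((1:ℝ)/2)^u = (1/2)^l - (1/2)^n := by
  intro n
  induction n with
  | zero => intro h; interval_cases l; simp
  | succ m ih =>
    intro h
    rcases Nat.lt_or_ge l (m+1) with h1 | h1
    · have hlm : l ≤ m := by omega
      rw [Finset.sum_Icc_succ_top (by omega : l+1 ≤ m+1), ih hlm]
      ring
    · have : l = m+1 := by omega
      subst this
      simp

/-- Core step-decay variance bound: with `T = 2^n` (so `log₂ T = n ≥ 1`),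
`0 < λ ≤ R²`, the accumulated variance sum
`S = ∑_{ℓ=1}^{n} σ²/(2^ℓ R²) ∏_{u=ℓ+1}^{n} exp(-λT/(2^u R² n))`
satisfies `S ≤ (2σ²/λ) · (n/T)`. -/
theorem stmt_9 (lam Rsq σ : ℝ) (hlam : 0 < lam) (hR : 0 < Rsq) (hlamR : lam ≤ Rsq)
    (hσ : 0 < σ ^ 2) (n : ℕ) (hn : 1 ≤ n) (T : ℕ) (hT : T = 2 ^ n) :
    (∑ l ∈ Finset.Icc 1 n, σ ^ 2 / (2 ^ l * Rsq) *
        ∏ u ∈ Finset.Icc (l + 1) n, Real.exp (-(lam * T) / (2 ^ u * Rsq * n))) ≤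
      2 * σ ^ 2 / lam * (n / T) := by
  have hn0 : (0:ℝ) < n := by exact_mod_cast hn
  have hTr : (T:ℝ) = 2^n := by rw [hT]; push_cast; ring
  set d : ℝ := lam / (Rsq * n) with hdd
  have hd0 : 0 < d := by positivity
  have hdn : d * n ≤ 1 := by
    rw [hdd, div_mul_eq_mul_div, div_le_one (by positivity)]
    nlinarith
  have hterm : ∀ l ∈ Finset.Icc 1 n,
      σ ^ 2 / (2 ^ l * Rsq) *
          ∏ u ∈ Finset.Icc (l + 1) n, Real.exp (-(lam * T) / (2 ^ u * Rsq * n))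
        = σ ^ 2 / (Rsq * 2^n) * (2^(n-l) * Real.exp (-(d * (2^(n-l) - 1)))) := by
    intro l hl
    rw [Finset.mem_Icc] at hl
    obtain ⟨hl1, hln⟩ := hl
    have hprod : ∏ u ∈ Finset.Icc (l + 1) n, Real.exp (-(lam * T) / (2 ^ u * Rsq * n))
        = Real.exp (∑ u ∈ Finset.Icc (l + 1) n, -(lam * T) / (2 ^ u * Rsq * n)) :=
      (Real.exp_sum _ _).symm
    have hsummand : ∀ u : ℕ,
        -(lam * (T:ℝ)) / (2 ^ u * Rsq * n) = (-(lam * T) / (Rsq * n)) * (1/2)^u := by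
      intro u
      rw [div_pow, one_pow]
      rw [div_mul_div_comm, mul_one]
      rw [div_eq_div_iff (by positivity) (by positivity)]
      ring
    have hsum : ∑ u ∈ Finset.Icc (l + 1) n, -(lam * (T:ℝ)) / (2 ^ u * Rsq * n)
        = (-(lam * T) / (Rsq * n)) * ((1/2)^l - (1/2)^n) := by
      calc ∑ u ∈ Finset.Icc (l + 1) n, -(lam * (T:ℝ)) / (2 ^ u * Rsq * n)
          = ∑ u ∈ Finset.Icc (l + 1) n, (-(lam * (T:ℝ)) / (Rsq * n)) * (1/2)^u :=
            Finset.sum_congr rfl fun u _ => hsummand u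
        _ = (-(lam * (T:ℝ)) / (Rsq * n)) * ∑ u ∈ Finset.Icc (l + 1) n, ((1:ℝ)/2)^u := by
            rw [Finset.mul_sum]
        _ = _ := by rw [sd9_geo l n hln]
    have hp1 : (2:ℝ)^(n-l) * 2^l = 2^n := by
      rw [← pow_add]; congr 1; omega
    have hexp : (-(lam * (T:ℝ)) / (Rsq * n)) * ((1/2)^l - (1/2)^n) = -(d * (2^(n-l) - 1)) := by
      rw [hTr, hdd]
      have h2 : ((2:ℝ)^l) ≠ 0 := by positivity
      have h2n : ((2:ℝ)^n) ≠ 0 := by positivity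
      rw [one_div_pow, one_div_pow, ← hp1]
      field_simp
    rw [hprod, hsum, hexp]
    have h2l' : σ ^ 2 / (2 ^ l * Rsq) = σ ^ 2 / (Rsq * 2^n) * 2^(n-l) := by
      rw [div_mul_eq_mul_div, div_eq_div_iff (by positivity) (by positivity), ← hp1]
      ring
    rw [h2l']
    ring
  rw [Finset.sum_congr rfl hterm]
  have hreindex :
      ∑ l ∈ Finset.Icc 1 n, σ ^ 2 / (Rsq * 2^n) * (2^(n-l) * Real.exp (-(d * (2^(n-l) - 1))))
        = ∑ k ∈ Finset.range n, σ ^ 2 / (Rsq * 2^n) * (2^k * Real.exp (-(d * (2^k - 1)))) := by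
    refine Finset.sum_nbij' (i := fun l => n - l) (j := fun k => n - k) ?_ ?_ ?_ ?_ ?_
    · intro a ha; rw [Finset.mem_Icc] at ha; rw [Finset.mem_range]; omega
    · intro a ha; rw [Finset.mem_range] at ha; rw [Finset.mem_Icc]; omega
    · intro a ha; rw [Finset.mem_Icc] at ha; omega
    · intro a ha; rw [Finset.mem_range] at ha; omega
    · intro a _; rfl
  rw [hreindex]
  have hkey := sd9_key_all d n hn hd0 hdn
  have hc : (0:ℝ) < σ ^ 2 / (Rsq * 2^n) / d := by positivity
  calc ∑ k ∈ Finset.range n, σ ^ 2 / (Rsq * 2^n) * (2^k * Real.exp (-(d * (2^k - 1))))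
      = (σ ^ 2 / (Rsq * 2^n) / d) *
          ∑ k ∈ Finset.range n, d * 2^k * Real.exp (-(d * (2^k - 1))) := by
        rw [Finset.mul_sum]
        refine Finset.sum_congr rfl fun k _ => ?_
        field_simp
    _ ≤ (σ ^ 2 / (Rsq * 2^n) / d) * 2 := mul_le_mul_of_nonneg_left hkey hc.le
    _ = 2 * σ ^ 2 / lam * (n / T) := by
        rw [hdd, hTr]
        field_simp
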